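/- If n ≥ 2, then there exists an even integer r with 1 ≤ r ≤ n such that τ(r) = max_{1 ≤ m ≤ n} τ(m); i.e., the maximum of the divisor function on [1,n] is attained at an even integer. -/

import Mathlib

theorem divisor_max_attained_even (n : ℕ) (hn : 2 ≤ n) :
    ∃ r : ℕ, Even r ∧ 1 ≤ r ∧ r ≤ n ∧
      r.divisors.card = ((Finset.Icc 1 n).sup fun m => m.divisors.card) := by
  have hne : (Finset.Icc 1 n).Nonempty := ⟨1, by simp; omega⟩
  obtain ⟨m, hm, hmax⟩ := Finset.exists_mem_eq_sup _ hne (fun m => m.divisors.card)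
  simp only [Finset.mem_Icc] at hm
  rcases Nat.even_or_odd m with he | ho
  · exact ⟨m, he, hm.1, hm.2, hmax.symm⟩
  · -- m is odd
    by_cases hm1 : m = 1
    · -- then sup = 1, but τ(2) = 2 ≤ sup, contradiction
      exfalso
      have hmem : (2 : ℕ) ∈ Finset.Icc 1 n := Finset.mem_Icc.mpr ⟨by norm_num, hn⟩
      have h2 : (2 : ℕ).divisors.card ≤ (Finset.Icc 1 n).sup fun m => m.divisors.card :=
        Finset.le_sup (f := fun m => m.divisors.card) hmem
      rw [hmax, hm1] at h2
      rw [show Nat.divisors 2 = {1, 2} by decide] at h2; simp at h2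
    · have hm0 : m ≠ 0 := by omega
      set p := m.minFac with hp
      have pp : p.Prime := Nat.minFac_prime hm1
      have hpodd : p ≠ 2 := by
        intro h
        have := Nat.minFac_dvd m
        rw [← hp, h] at this
        exact (Nat.not_even_iff_odd.mpr ho) ((even_iff_two_dvd).mpr this)
      have hp2 : 2 < p := lt_of_le_of_ne pp.two_le (Ne.symm hpodd)
      set a := m.factorization p with ha
      have ha1 : 1 ≤ a := (pp.factorization_pos_of_dvd hm0 (Nat.minFac_dvd m))
      set s := ordCompl[p] m with hs
      have hms : p ^ a * s = m := Nat.ordProj_mul_ordCompl_eq_self m p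
      have hs0 : s ≠ 0 := (Nat.ordCompl_pos p hm0).ne'
      have hsodd : Odd s := by
        rcases Nat.even_or_odd s with hse | hso
        · exfalso
          have : 2 ∣ s := even_iff_two_dvd.mp hse
          have : 2 ∣ m := this.trans (Nat.ordCompl_dvd m p)
          exact (Nat.not_even_iff_odd.mpr ho) (even_iff_two_dvd.mpr this)
        · exact hso
      have hcop : Nat.Coprime (2 ^ a) s :=
        Nat.Coprime.pow_left a (Nat.coprime_two_left.mpr hsodd)
      refine ⟨2 ^ a * s, ?_, ?_, ?_, ?_⟩
      · exact (Even.mul_right (by exact ⟨2 ^ (a - 1), by rw [← two_mul, ← pow_succ']; congr 1; omega⟩) s)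
      · have : 0 < 2 ^ a * s := Nat.mul_pos (Nat.pow_pos (by norm_num)) (Nat.pos_of_ne_zero hs0)
        omega
      · calc 2 ^ a * s ≤ p ^ a * s :=
              Nat.mul_le_mul_right s (Nat.pow_le_pow_left (le_of_lt hp2) a)
          _ = m := hms
          _ ≤ n := hm.2
      · rw [hmax]
        have hcard_pow : ∀ q : ℕ, q.Prime → ∀ k : ℕ, (q ^ k).divisors.card = k + 1 := by
          intro q hq k
          rw [Nat.divisors_prime_pow hq]
          simp
        rw [Nat.Coprime.card_divisors_mul hcop, ← hms,
          Nat.Coprime.card_divisors_mul ((Nat.coprime_ordCompl pp hm0).pow_left a),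
          hcard_pow 2 Nat.prime_two a, hcard_pow p pp a]
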